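/- A positive series ∑ aₙ diverges if and only if there exists a positive sequence ζₙ with ζₙ·(aₙ/aₙ₊₁) − ζₙ₊₁ ≤ 0 for all n and ∑ 1/ζₙ = ∞. -/

import Mathlib

theorem stmt_5 (a : ℕ → ℝ) (ha : ∀ n, 0 < a n) :
    ¬ Summable a ↔
      ∃ ζ : ℕ → ℝ, (∀ n, 0 < ζ n) ∧
        (∀ n, ζ n * (a n / a (n + 1)) - ζ (n + 1) ≤ 0) ∧
        ¬ Summable (fun n => 1 / ζ n) := by
  constructor
  · intro h
    refine ⟨fun n => 1 / a n, fun n => one_div_pos.mpr (ha n), fun n => ?_, ?_⟩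
    · have h1 := (ha n).ne'
      have h2 := (ha (n + 1)).ne'
      field_simp
      simp
    · simpa [one_div_one_div] using h
  · rintro ⟨ζ, hpos, hle, hns⟩ hsa
    apply hns
    have hmono : Monotone (fun n => ζ n * a n) := by
      apply monotone_nat_of_le_succ
      intro n
      have h := hle n
      have h2 := ha (n + 1)
      have h3 : ζ n * (a n / a (n + 1)) ≤ ζ (n + 1) := by linarith
      calc ζ n * a n = ζ n * (a n / a (n + 1)) * a (n + 1) := by
            field_simp
        _ ≤ ζ (n + 1) * a (n + 1) := by nlinarith
    have hb0 : 0 < ζ 0 * a 0 := mul_pos (hpos 0) (ha 0)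
    refine Summable.of_nonneg_of_le (f := fun n => a n / (ζ 0 * a 0))
      (fun n => one_div_nonneg.mpr (hpos n).le) (fun n => ?_) (hsa.div_const _)
    · have hbn : ζ 0 * a 0 ≤ ζ n * a n := hmono (Nat.zero_le n)
      have han := ha n
      have hzn := hpos n
      have key : (1 : ℝ) / ζ n = a n / (ζ n * a n) := by
        field_simp
      rw [key]
      exact div_le_div_of_nonneg_left han.le hb0 hbn
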